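/- For every integer k ≥ 1, the following identity of formal power series in q holds: Σ_{n=1}^∞ η̄_{2k}(n) q^n = (1/(q;q)_∞) · Σ_{n=1}^∞ (−1)^{n−1} q^{n(3n+1)/2 + kn} / (1 − q^n)^{2k}. -/

import Mathlib

open PowerSeries

/-- The rank of a partition: its largest part minus its number of parts. -/
def Nat.Partition.rank {n : ℕ} (p : n.Partition) : ℤ :=
  (p.parts.sup : ℤ) - (p.parts.card : ℤ)

/-- `N(m,n)`: the number of partitions of `n` with rank `m`. -/
noncomputable def rankCount (m : ℤ) (n : ℕ) : ℕ :=
  Nat.card {p : n.Partition // p.rank = m}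

/-- The symmetrized positive rank moment
`η̄_{2k}(n) = Σ_{m ≥ 1} binom(m + k - 1, 2k)·N(m,n)` (the summation index `m : ℕ`
below stands for the rank `m + 1`). -/
noncomputable def etaBarEven (k n : ℕ) : ℤ :=
  ∑' m : ℕ, Ring.choose ((m : ℤ) + (k : ℤ)) (2 * k) * (rankCount ((m : ℤ) + 1) n : ℤ)

/-- The infinite product `(q;q)_∞ = ∏_{n≥1} (1 - q^n)` as a formal power series in
`ℤ⟦X⟧`: its `N`-th coefficient is the (stable) `N`-th coefficient of the partial products. -/
noncomputable def qPochhammerInf : PowerSeries ℤ :=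
  PowerSeries.mk fun N =>
    PowerSeries.coeff (R := ℤ) N (∏ n ∈ Finset.range (N + 1), (1 - PowerSeries.X ^ (n + 1)))

/-- The sum `Σ_{j≥0} f j` of a family of power series in which `f j` has `X`-order
greater than `j`, so each coefficient receives only finitely many contributions. -/
noncomputable def seriesSum (f : ℕ → PowerSeries ℤ) : PowerSeries ℤ :=
  PowerSeries.mk fun N => ∑ j ∈ Finset.range (N + 1), PowerSeries.coeff (R := ℤ) N (f j)


namespace EtaBarAux

open Finset

lemma multiset_sup_mem {s : Multiset ℕ} (h : s ≠ 0) : s.sup ∈ s := by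
  induction s using Multiset.induction with
  | empty => simp at h
  | cons a t ih =>
    rw [Multiset.sup_cons]
    rcases eq_or_ne t 0 with rfl | ht
    · simp
    · rcases le_total a t.sup with h1 | h1
      · rw [sup_eq_right.2 h1]; exact Multiset.mem_cons_of_mem (ih ht)
      · rw [sup_eq_left.2 h1]; exact Multiset.mem_cons_self _ _

lemma sum_map_add_one (s : Multiset ℕ) :
    (s.map (· + 1)).sum = s.sum + Multiset.card s := by
  induction s using Multiset.induction with
  | empty => simp
  | cons a t ih => simp [ih]; ring

lemma sum_map_sub_one {s : Multiset ℕ} (h : ∀ x ∈ s, 0 < x) :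
    (s.map (· - 1)).sum + Multiset.card s = s.sum := by
  induction s using Multiset.induction with
  | empty => simp
  | cons a t ih =>
    have ha := h a (Multiset.mem_cons_self _ _)
    have := ih (fun x hx => h x (Multiset.mem_cons_of_mem hx))
    simp only [Multiset.map_cons, Multiset.sum_cons, Multiset.card_cons]
    omega

lemma sum_filter_ne_zero (s : Multiset ℕ) : (s.filter (· ≠ 0)).sum = s.sum := by
  induction s using Multiset.induction with
  | empty => simp
  | cons a t ih =>
    rw [Multiset.filter_cons, Multiset.sum_cons]
    by_cases h : a = 0
    · simp [h, ih]
    · simp [h, ih]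

lemma clean_map (s : Multiset ℕ) (h : ∀ x ∈ s, 0 < x) :
    ((s.map (· - 1)).filter (· ≠ 0)).map (· + 1) = s.filter (· ≠ 1) := by
  induction s using Multiset.induction with
  | empty => simp
  | cons a t ih =>
    have ha := h a (Multiset.mem_cons_self _ _)
    have ih' := ih (fun x hx => h x (Multiset.mem_cons_of_mem hx))
    by_cases h1 : a = 1
    · subst h1
      simp only [Multiset.map_cons, Multiset.filter_cons]
      simp [ih']
    · have h2 : a - 1 ≠ 0 := by omega
      simp only [Multiset.map_cons, Multiset.filter_cons, h1, h2, if_pos, if_true,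
        ite_not]
      simp only [h2, h1, if_false]
      rw [Multiset.map_add, ih']
      congr 1
      simp only [Multiset.map_singleton]
      congr 1
      omega

end EtaBarAux

section Stage2
open Finset
namespace EtaBarAux

open scoped Classical

/-- Number of partitions of `n`. -/
noncomputable def Pcount (n : ℕ) : ℕ := Nat.card (Nat.Partition n)

/-- Number of partitions of `n` of rank at least `m`. -/
noncomputable def G (m n : ℕ) : ℕ := Nat.card {p : n.Partition // (m : ℤ) ≤ p.rank}

lemma parts_ne_zero {n : ℕ} (p : n.Partition) (hn : n ≠ 0) : p.parts ≠ 0 := by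
  intro h
  exact hn (by rw [← p.parts_sum, h]; simp)

lemma sup_le_n {n : ℕ} (p : n.Partition) : p.parts.sup ≤ n := by
  rcases eq_or_ne p.parts 0 with h | h
  · simp [h]
  · have := Multiset.single_le_sum (fun (x : ℕ) _ => Nat.zero_le x) _ (multiset_sup_mem h)
    rwa [p.parts_sum] at this

lemma rank_lt {n : ℕ} (p : n.Partition) (hn : n ≠ 0) : p.rank < n := by
  have h1 : p.parts.sup ≤ n := sup_le_n p
  have h2 : 1 ≤ Multiset.card p.parts := by
    rw [Nat.one_le_iff_ne_zero, Ne, Multiset.card_eq_zero]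
    exact parts_ne_zero p hn
  rw [Nat.Partition.rank]
  omega

lemma rank_facts {m n : ℕ} (hm : 1 ≤ m) (p : n.Partition) (hp : (m : ℤ) ≤ p.rank) :
    p.parts.sup ∈ p.parts ∧ 1 ≤ Multiset.card p.parts ∧
      Multiset.card p.parts + m ≤ p.parts.sup ∧ p.parts.sup ≤ n := by
  have hne : p.parts ≠ 0 := by
    intro h
    rw [Nat.Partition.rank, h] at hp
    simp at hp
    omega
  have h2 : 1 ≤ Multiset.card p.parts := by
    rwa [Nat.one_le_iff_ne_zero, Ne, Multiset.card_eq_zero]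
  have h3 : Multiset.card p.parts + m ≤ p.parts.sup := by
    rw [Nat.Partition.rank] at hp; omega
  exact ⟨multiset_sup_mem hne, h2, h3, sup_le_n p⟩

lemma G_eq_zero {m n : ℕ} (hm : 1 ≤ m) (h : n ≤ m) : G m n = 0 := by
  rw [G, Nat.card_eq_zero]
  left
  constructor
  rintro ⟨p, hp⟩
  rcases eq_or_ne n 0 with rfl | hn
  · rw [Nat.Partition.rank, Nat.Partition.partition_zero_parts p] at hp
    simp at hp
    omega
  · have := rank_lt p hn
    omega

/-- Dyson's map: remove the largest part `a`, add 1 to each remaining part, and append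
`a - m - 1 - (ℓ - 1)` parts equal to 1. -/
noncomputable def fwd (m : ℕ) {n : ℕ} (hm : 1 ≤ m) (p : n.Partition)
    (hp : (m : ℤ) ≤ p.rank) : (n - (m + 1)).Partition where
  parts := (p.parts.erase p.parts.sup).map (· + 1) +
    Multiset.replicate (p.parts.sup - m - 1 - (Multiset.card p.parts - 1)) 1
  parts_pos := by
    intro i hi
    rw [Multiset.mem_add] at hi
    rcases hi with hi | hi
    · rcases Multiset.mem_map.1 hi with ⟨x, _, rfl⟩
      omega
    · rw [Multiset.eq_of_mem_replicate hi]
      omega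
  parts_sum := by
    obtain ⟨hmem, h2, h3, h4⟩ := rank_facts hm p hp
    have h1 : p.parts.sup + (p.parts.erase p.parts.sup).sum = n := by
      rw [← Multiset.sum_cons, Multiset.cons_erase hmem, p.parts_sum]
    have h5 : Multiset.card (p.parts.erase p.parts.sup) = Multiset.card p.parts - 1 :=
      Multiset.card_erase_of_mem hmem
    rw [Multiset.sum_add, sum_map_add_one, Multiset.sum_replicate, h5, smul_eq_mul, mul_one]
    rw [Nat.Partition.rank] at hp
    omega

lemma fwd_card (m : ℕ) {n : ℕ} (hm : 1 ≤ m) (p : n.Partition) (hp : (m : ℤ) ≤ p.rank) :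
    Multiset.card (fwd m hm p hp).parts = p.parts.sup - m - 1 := by
  obtain ⟨hmem, h2, h3, h4⟩ := rank_facts hm p hp
  rw [fwd]
  simp only [Multiset.card_add, Multiset.card_map, Multiset.card_replicate,
    Multiset.card_erase_of_mem hmem, Nat.pred_eq_sub_one]
  omega

lemma fwd_sup_le (m : ℕ) {n : ℕ} (hm : 1 ≤ m) (p : n.Partition) (hp : (m : ℤ) ≤ p.rank) :
    (fwd m hm p hp).parts.sup ≤ p.parts.sup + 1 := by
  rw [Multiset.sup_le]
  intro b hb
  rw [fwd] at hb
  rw [Multiset.mem_add] at hb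
  rcases hb with hb | hb
  · rcases Multiset.mem_map.1 hb with ⟨x, hx, rfl⟩
    have : x ≤ p.parts.sup := Multiset.le_sup (Multiset.mem_of_mem_erase hx)
    omega
  · rw [Multiset.eq_of_mem_replicate hb]
    omega

lemma fwd_rank (m : ℕ) {n : ℕ} (hm : 1 ≤ m) (p : n.Partition) (hp : (m : ℤ) ≤ p.rank) :
    (fwd m hm p hp).rank ≤ (m : ℤ) + 2 := by
  obtain ⟨hmem, h2, h3, h4⟩ := rank_facts hm p hp
  have hc := fwd_card m hm p hp
  have hs := fwd_sup_le m hm p hp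
  rw [Nat.Partition.rank, hc]
  omega

/-- The inverse of Dyson's map: subtract 1 from each part (discarding resulting zeros) and
add a new largest part `ℓ + m + 1`. -/
noncomputable def bwd (m n : ℕ) {n' : ℕ} (h : n' + m + 1 = n) (q : n'.Partition) :
    n.Partition where
  parts := (Multiset.card q.parts + m + 1) ::ₘ (q.parts.map (· - 1)).filter (· ≠ 0)
  parts_pos := by
    intro i hi
    rw [Multiset.mem_cons] at hi
    rcases hi with rfl | hi
    · omega
    · have := Multiset.of_mem_filter hi
      omega
  parts_sum := by
    have h1 : ((q.parts.map (· - 1)).filter (· ≠ 0)).sum = (q.parts.map (· - 1)).sum :=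
      sum_filter_ne_zero _
    have h2 := sum_map_sub_one (s := q.parts) (fun x hx => q.parts_pos hx)
    rw [Multiset.sum_cons, h1, q.parts_sum] at *
    omega

lemma bwd_sup (m n : ℕ) {n' : ℕ} (h : n' + m + 1 = n) (q : n'.Partition)
    (hq : q.rank ≤ (m : ℤ) + 2) :
    (bwd m n h q).parts.sup = Multiset.card q.parts + m + 1 := by
  have hsup : q.parts.sup ≤ Multiset.card q.parts + m + 2 := by
    rw [Nat.Partition.rank] at hq; omega
  rw [bwd, Multiset.sup_cons]
  rw [sup_eq_left, Multiset.sup_le]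
  intro b hb
  have hb2 := Multiset.mem_of_mem_filter hb
  rcases Multiset.mem_map.1 hb2 with ⟨x, hx, rfl⟩
  have : x ≤ q.parts.sup := Multiset.le_sup hx
  omega

lemma bwd_card (m n : ℕ) {n' : ℕ} (h : n' + m + 1 = n) (q : n'.Partition) :
    Multiset.card (bwd m n h q).parts ≤ Multiset.card q.parts + 1 := by
  rw [bwd]
  simp only [Multiset.card_cons]
  have h1 : Multiset.card ((q.parts.map (· - 1)).filter (· ≠ 0)) ≤
      Multiset.card (q.parts.map (· - 1)) := Multiset.card_le_card (Multiset.filter_le _ _)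
  rw [Multiset.card_map] at h1
  omega

lemma bwd_rank (m n : ℕ) {n' : ℕ} (h : n' + m + 1 = n) (q : n'.Partition)
    (hq : q.rank ≤ (m : ℤ) + 2) : (m : ℤ) ≤ (bwd m n h q).rank := by
  have h1 := bwd_sup m n h q hq
  have h2 := bwd_card m n h q
  rw [Nat.Partition.rank, h1]
  omega

end EtaBarAux
end Stage2

namespace EtaBarAux
open scoped Classical

lemma fwd_parts (m : ℕ) {n : ℕ} (hm : 1 ≤ m) (p : n.Partition) (hp : (m : ℤ) ≤ p.rank) :
    (fwd m hm p hp).parts = (p.parts.erase p.parts.sup).map (· + 1) +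
      Multiset.replicate (p.parts.sup - m - 1 - (Multiset.card p.parts - 1)) 1 := rfl

lemma bwd_parts (m n : ℕ) {n' : ℕ} (h : n' + m + 1 = n) (q : n'.Partition) :
    (bwd m n h q).parts =
      (Multiset.card q.parts + m + 1) ::ₘ (q.parts.map (· - 1)).filter (· ≠ 0) := rfl

lemma bwd_fwd {m n : ℕ} (hm : 1 ≤ m) (hn : m + 1 ≤ n) (p : n.Partition)
    (hp : (m : ℤ) ≤ p.rank) :
    bwd m n (by omega) (fwd m hm p hp) = p := by
  obtain ⟨hmem, h2, h3, h4⟩ := rank_facts hm p hp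
  apply Nat.Partition.ext
  rw [bwd_parts, fwd_card, fwd_parts]
  have e1 : (((p.parts.erase p.parts.sup).map (· + 1)).map (· - 1)) =
      p.parts.erase p.parts.sup := by
    rw [Multiset.map_map]
    exact Eq.trans (Multiset.map_congr rfl (fun x _ => by simp)) (Multiset.map_id _)
  have e2 : ((Multiset.replicate (p.parts.sup - m - 1 - (Multiset.card p.parts - 1)) 1).map
      (· - 1)) = Multiset.replicate (p.parts.sup - m - 1 - (Multiset.card p.parts - 1)) 0 := by
    rw [Multiset.map_replicate]
  rw [Multiset.map_add, e1, e2]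
  have e3 : ((p.parts.erase p.parts.sup) +
      Multiset.replicate (p.parts.sup - m - 1 - (Multiset.card p.parts - 1)) 0).filter
      (· ≠ 0) = p.parts.erase p.parts.sup := by
    rw [Multiset.filter_add]
    rw [Multiset.filter_eq_self.2, Multiset.filter_eq_nil.2, add_zero]
    · intro a ha
      simp [Multiset.eq_of_mem_replicate ha]
    · intro x hx
      have := p.parts_pos (Multiset.mem_of_mem_erase hx)
      simp; omega
  rw [e3]
  have e4 : p.parts.sup - m - 1 + m + 1 = p.parts.sup := by omega
  rw [e4, Multiset.cons_erase hmem]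

lemma fwd_bwd {m n : ℕ} (hm : 1 ≤ m) (hn : m + 1 ≤ n) (q : (n - (m + 1)).Partition)
    (hq : q.rank ≤ (m : ℤ) + 2) :
    fwd m hm (bwd m n (by omega) q) (bwd_rank m n (by omega) q hq) = q := by
  have hcons : (bwd m n (by omega : n - (m+1) + m + 1 = n) q).parts =
      (Multiset.card q.parts + m + 1) ::ₘ (q.parts.map (· - 1)).filter (· ≠ 0) := rfl
  apply Nat.Partition.ext
  rw [fwd_parts, bwd_sup m n (by omega) q hq, hcons]
  rw [Multiset.erase_cons_head, Multiset.card_cons]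
  rw [clean_map _ (fun x hx => q.parts_pos hx)]
  have hc1 : Multiset.card ((q.parts.map (· - 1)).filter (· ≠ 0)) =
      Multiset.card (q.parts.filter (· ≠ 1)) := by
    have := congrArg Multiset.card (clean_map q.parts (fun x hx => q.parts_pos hx))
    rwa [Multiset.card_map] at this
  have hc2 : Multiset.card (q.parts.filter (· ≠ 1)) + Multiset.count 1 q.parts =
      Multiset.card q.parts := by
    conv_rhs => rw [← Multiset.filter_add_not (· ≠ 1) q.parts]
    rw [Multiset.card_add]
    congr 1
    have : q.parts.filter (fun a => ¬a ≠ 1) = q.parts.filter (· = 1) :=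
      Multiset.filter_congr (fun x _ => by simp)
    rw [this, Multiset.filter_eq', Multiset.card_replicate]
  have e5 : Multiset.card q.parts + m + 1 - m - 1 -
      (Multiset.card ((q.parts.map (· - 1)).filter (· ≠ 0)) + 1 - 1) =
      Multiset.count 1 q.parts := by omega
  rw [e5]
  have : Multiset.replicate (Multiset.count 1 q.parts) 1 = q.parts.filter (· = 1) :=
    (Multiset.filter_eq' _ _).symm
  rw [this]
  have : q.parts.filter (· = 1) = q.parts.filter (fun a => ¬a ≠ 1) :=
    (Multiset.filter_congr (fun x _ => by simp)).symm
  rw [this, Multiset.filter_add_not]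

lemma G_add {m n : ℕ} (hm : 1 ≤ m) (hn : m + 1 ≤ n) :
    G m n + G (m + 3) (n - (m + 1)) = Pcount (n - (m + 1)) := by
  have e : {p : n.Partition // (m : ℤ) ≤ p.rank} ≃
      {q : (n - (m + 1)).Partition // q.rank ≤ (m : ℤ) + 2} :=
    { toFun := fun x => ⟨fwd m hm x.1 x.2, fwd_rank m hm x.1 x.2⟩
      invFun := fun y => ⟨bwd m n (by omega) y.1, bwd_rank m n (by omega) y.1 y.2⟩
      left_inv := fun x => Subtype.ext (bwd_fwd hm hn x.1 x.2)
      right_inv := fun y => Subtype.ext (fwd_bwd hm hn y.1 y.2) }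
  have h1 : G m n = Nat.card {q : (n - (m + 1)).Partition // q.rank ≤ (m : ℤ) + 2} :=
    Nat.card_congr e
  have e2 : {q : (n - (m + 1)).Partition // q.rank ≤ (m : ℤ) + 2} ≃
      {q : (n - (m + 1)).Partition // ¬ (((m + 3 : ℕ) : ℤ) ≤ q.rank)} :=
    Equiv.subtypeEquivRight (fun q => by push_cast; omega)
  rw [h1, Nat.card_congr e2, G, Pcount]
  rw [Nat.card_eq_fintype_card, Nat.card_eq_fintype_card, Nat.card_eq_fintype_card]
  rw [Fintype.card_subtype_compl]
  have hle : Fintype.card {q : (n - (m + 1)).Partition // ((m + 3 : ℕ) : ℤ) ≤ q.rank} ≤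
      Fintype.card ((n - (m + 1)).Partition) := Fintype.card_subtype_le _
  omega

end EtaBarAux

namespace EtaBarAux
open Finset

/-- `Pcount` extended to integers by zero. -/
noncomputable def PZ (x : ℤ) : ℤ := if 0 ≤ x then (Pcount x.toNat : ℤ) else 0

lemma PZ_neg {x : ℤ} (h : x < 0) : PZ x = 0 := if_neg (by omega)

lemma PZ_ofNat (a : ℕ) : PZ (a : ℤ) = (Pcount a : ℤ) := by
  rw [PZ, if_pos (by positivity), Int.toNat_natCast]

/-- The pentagonal number `s (3s - 1) / 2`. -/
def pent (s : ℕ) : ℕ := s * (3 * s - 1) / 2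

lemma pent_one : pent 1 = 1 := rfl

lemma pent_succ (s : ℕ) : pent (s + 1) = pent s + (3 * s + 1) := by
  have h1 : (s + 1) * (3 * (s + 1) - 1) = s * (3 * s - 1) + (3 * s + 1) * 2 := by
    rcases s with _ | t
    · simp
    · have e1 : 3 * (t + 1) - 1 = 3 * t + 2 := by omega
      have e2 : 3 * (t + 1 + 1) - 1 = 3 * t + 5 := by omega
      rw [e1, e2]; ring
  rw [pent, pent, h1, Nat.add_mul_div_right _ _ (by norm_num : (0:ℕ) < 2)]

lemma pent_succ_ge (s : ℕ) : s + 1 ≤ pent (s + 1) := by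
  induction s with
  | zero => simp [pent_one]
  | succ t ih => rw [pent_succ]; omega

lemma G_eq_sum (n : ℕ) : ∀ m, 1 ≤ m →
    (G m n : ℤ) = ∑ s ∈ range n, (-1 : ℤ) ^ s * PZ ((n : ℤ) - pent (s + 1) - (s + 1) * m) := by
  induction n using Nat.strong_induction_on with
  | _ n ih =>
    intro m hm
    rcases le_or_gt n m with hnm | hnm
    · rw [G_eq_zero hm hnm, Finset.sum_eq_zero, Nat.cast_zero]
      intro s _
      rw [PZ_neg, mul_zero]
      have h1 := pent_succ_ge s
      have h2 : (s : ℤ) + 1 ≤ ((s : ℤ) + 1) * m :=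
        le_mul_of_one_le_right (by positivity) (by exact_mod_cast hm)
      have h3 : (m : ℤ) ≤ ((s : ℤ) + 1) * m :=
        le_mul_of_one_le_left (by positivity) (by push_cast; omega)
      push_cast
      omega
    · -- n ≥ m + 1
      have hn : m + 1 ≤ n := hnm
      have hrec := G_add hm hn
      have hih := ih (n - (m + 1)) (by omega) (m + 3) (by omega)
      have hGm : (G m n : ℤ) =
          (Pcount (n - (m + 1)) : ℤ) - (G (m + 3) (n - (m + 1)) : ℤ) := by
        have := congrArg (Nat.cast : ℕ → ℤ) hrec
        push_cast at this
        omega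
      rw [hGm, hih]
      have hext : ∑ s ∈ range (n - (m + 1)),
            (-1 : ℤ) ^ s * PZ (((n - (m + 1) : ℕ) : ℤ) - pent (s + 1) -
              (s + 1) * ((m + 3 : ℕ) : ℤ))
          = ∑ s ∈ range (n - 1),
            (-1 : ℤ) ^ s * PZ (((n - (m + 1) : ℕ) : ℤ) - pent (s + 1) -
              (s + 1) * ((m + 3 : ℕ) : ℤ)) := by
        apply Finset.sum_subset
        · intro x hx
          rw [mem_range] at *
          omega
        · intro x _ hx
          rw [mem_range, not_lt] at hx
          rw [PZ_neg, mul_zero]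
          have h1 := pent_succ_ge x
          have h2 : (x : ℤ) + 1 ≤ ((x : ℤ) + 1) * ((m + 3 : ℕ) : ℤ) :=
            le_mul_of_one_le_right (by positivity) (by push_cast; omega)
          omega
      rw [hext]
      have hsplit : range n = range ((n - 1) + 1) := by congr 1; omega
      rw [hsplit, Finset.sum_range_succ']
      have h0 : (-1 : ℤ) ^ 0 * PZ ((n : ℤ) - pent (0 + 1) - ((0 : ℕ) + 1) * m) =
          (Pcount (n - (m + 1)) : ℤ) := by
        have harg : ((n : ℤ) - pent (0 + 1) - ((0 : ℕ) + 1) * m) =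
            ((n - (m + 1) : ℕ) : ℤ) := by
          rw [pent_one]; push_cast; omega
        rw [harg, PZ_ofNat, pow_zero, one_mul]
      rw [h0]
      have hterm : ∀ s ∈ range (n - 1),
          (-1 : ℤ) ^ (s + 1) * PZ ((n : ℤ) - pent (s + 1 + 1) - (((s + 1 : ℕ) : ℤ) + 1) * m) =
          -((-1 : ℤ) ^ s * PZ (((n - (m + 1) : ℕ) : ℤ) - pent (s + 1) -
            ((s : ℤ) + 1) * ((m + 3 : ℕ) : ℤ))) := by
        intro s _
        have harg : (n : ℤ) - pent (s + 1 + 1) - (((s + 1 : ℕ) : ℤ) + 1) * m =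
            ((n - (m + 1) : ℕ) : ℤ) - pent (s + 1) - ((s : ℤ) + 1) * ((m + 3 : ℕ) : ℤ) := by
          have hps : (pent (s + 1 + 1) : ℤ) = (pent (s + 1) : ℤ) + 3 * s + 4 := by
            rw [pent_succ (s + 1)]; push_cast; ring
          have hn'c : ((n - (m + 1) : ℕ) : ℤ) = (n : ℤ) - m - 1 := by omega
          rw [hps, hn'c]; push_cast; ring
        rw [harg, pow_succ]
        ring
      rw [Finset.sum_congr rfl hterm]
      rw [Finset.sum_neg_distrib]
      ring

end EtaBarAux

namespace EtaBarAux
open Finset PowerSeries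
open scoped Classical
noncomputable section
universe u
variable {ι : Type u} {α : Type*}
open Finset.HasAntidiagonal

/-- A convenience constructor for the power series whose coefficients indicate a subset. -/
def indicatorSeries (α : Type*) [Semiring α] (s : Set ℕ) : PowerSeries α :=
  PowerSeries.mk fun n => if n ∈ s then 1 else 0

theorem coeff_indicator (s : Set ℕ) [Semiring α] (n : ℕ) :
    coeff (R := α) n (indicatorSeries _ s) = if n ∈ s then 1 else 0 :=
  coeff_mk _ _

theorem coeff_indicator_pos (s : Set ℕ) [Semiring α] (n : ℕ) (h : n ∈ s) :
    coeff (R := α) n (indicatorSeries _ s) = 1 := by rw [coeff_indicator, if_pos h]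

theorem coeff_indicator_neg (s : Set ℕ) [Semiring α] (n : ℕ) (h : n ∉ s) :
    coeff (R := α) n (indicatorSeries _ s) = 0 := by rw [coeff_indicator, if_neg h]

theorem constantCoeff_indicator (s : Set ℕ) [Semiring α] :
    constantCoeff (R := α) (indicatorSeries _ s) = if 0 ∈ s then 1 else 0 :=
  rfl

theorem two_series (i : ℕ) [Semiring α] :
    1 + (X : PowerSeries α) ^ i.succ = indicatorSeries α {0, i.succ} := by
  ext n
  simp only [coeff_indicator, coeff_one, coeff_X_pow, Set.mem_insert_iff, Set.mem_singleton_iff,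
    map_add]
  cases' n with d
  · simp [(Nat.succ_ne_zero i).symm]
  · simp [Nat.succ_ne_zero d]

theorem num_series' [Field α] (i : ℕ) :
    (1 - (X : PowerSeries α) ^ (i + 1))⁻¹ = indicatorSeries α {k | i + 1 ∣ k} := by
  rw [PowerSeries.inv_eq_iff_mul_eq_one]
  · ext n
    cases n with
    | zero => simp [mul_sub, zero_pow, constantCoeff_indicator]
    | succ n =>
      simp only [coeff_one, if_false, mul_sub, mul_one, coeff_indicator,
        LinearMap.map_sub, reduceCtorEq]
      simp_rw [coeff_mul, coeff_X_pow, coeff_indicator, @boole_mul _ _ _ _]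
      simp_rw [← ite_and]
      erw [sum_boole]
      rw [sub_eq_iff_eq_add, zero_add]
      symm
      split_ifs with h
      · suffices #{a ∈ antidiagonal (n + 1) | i + 1 ∣ a.fst ∧ a.snd = i + 1} = 1 by
          simp only [Set.mem_setOf_eq]; convert congr_arg ((↑) : ℕ → α) this; norm_cast
        rw [card_eq_one]
        cases' h with p hp
        refine ⟨((i + 1) * (p - 1), i + 1), ?_⟩
        ext ⟨a₁, a₂⟩
        simp only [mem_filter, Prod.mk.injEq, Finset.HasAntidiagonal.mem_antidiagonal, mem_singleton]
        constructor
        · rintro ⟨a_left, ⟨a, rfl⟩, rfl⟩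
          refine ⟨?_, rfl⟩
          rw [Nat.mul_sub_left_distrib, ← hp, ← a_left, mul_one, Nat.add_sub_cancel]
        · rintro ⟨rfl, rfl⟩
          match p with
          | 0 => rw [mul_zero] at hp; cases hp
          | p + 1 => rw [hp]; simp [mul_add]
      · suffices #{a ∈ antidiagonal (n + 1) | i + 1 ∣ a.fst ∧ a.snd = i + 1} = 0 by
          simp only [Set.mem_setOf_eq]; convert congr_arg ((↑) : ℕ → α) this; norm_cast
        rw [card_eq_zero]
        apply eq_empty_of_forall_notMem
        simp only [Prod.forall, mem_filter, not_and, Finset.HasAntidiagonal.mem_antidiagonal]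
        rintro _ h₁ h₂ ⟨a, rfl⟩ rfl
        apply h
        simp [← h₂]
  · simp [zero_pow]

-- The main workhorse of the partition theorem proof.
theorem partialGF_prop (α : Type*) [CommSemiring α] (n : ℕ) (s : Finset ℕ) (hs : ∀ i ∈ s, 0 < i)
    (c : ℕ → Set ℕ) (hc : ∀ i, i ∉ s → 0 ∈ c i) :
    #{p : n.Partition | (∀ j, p.parts.count j ∈ c j) ∧ ∀ j ∈ p.parts, j ∈ s} =
      coeff (R := α) n (∏ i ∈ s, indicatorSeries α ((· * i) '' c i)) := by
  simp_rw [coeff_prod, coeff_indicator, prod_boole, sum_boole]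
  apply congr_arg
  simp only [mem_univ, forall_true_left, not_and, not_forall, exists_prop,
    Set.mem_image, not_exists]
  set φ : (a : Nat.Partition n) →
    a ∈ filter (fun p ↦ (∀ (j : ℕ), Multiset.count j p.parts ∈ c j) ∧ ∀ j ∈ p.parts, j ∈ s) univ →
    ℕ →₀ ℕ := fun p _ => {
      toFun := fun i => Multiset.count i p.parts • i
      support := Finset.filter (fun i => i ≠ 0) p.parts.toFinset
      mem_support_toFun := fun a => by
        simp only [smul_eq_mul, ne_eq, mul_eq_zero, Multiset.count_eq_zero]
        rw [not_or, not_not]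
        simp only [Multiset.mem_toFinset, not_not, mem_filter] }
  refine Finset.card_bij φ ?_ ?_ ?_
  · intro a ha
    simp only [φ, not_forall, not_exists, not_and, exists_prop, mem_filter]
    rw [mem_finsuppAntidiag]
    dsimp only [ne_eq, smul_eq_mul, id_eq, eq_mpr_eq_cast, le_eq_subset, Finsupp.coe_mk]
    simp only [mem_univ, forall_true_left, not_and, not_forall, exists_prop,
      mem_filter, true_and] at ha
    refine ⟨⟨?_, fun i ↦ ?_⟩, fun i _ ↦ ⟨a.parts.count i, ha.1 i, rfl⟩⟩
    · conv_rhs => simp [← a.parts_sum]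
      rw [sum_multiset_count_of_subset _ s]
      · simp only [smul_eq_mul]
      · intro i
        simp only [Multiset.mem_toFinset, not_not, mem_filter]
        apply ha.2
    · simp only [ne_eq, Multiset.mem_toFinset, not_not, mem_filter, and_imp]
      exact fun hi _ ↦ ha.2 i hi
  · intro p₁ hp₁ p₂ hp₂ h
    apply Nat.Partition.ext
    simp only [true_and, mem_univ, mem_filter] at hp₁ hp₂
    ext i
    simp only [φ, ne_eq, Multiset.mem_toFinset, not_not, smul_eq_mul, Finsupp.mk.injEq] at h
    by_cases hi : i = 0
    · rw [hi]
      rw [Multiset.count_eq_zero_of_notMem]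
      · rw [Multiset.count_eq_zero_of_notMem]
        intro a; exact Nat.lt_irrefl 0 (hs 0 (hp₂.2 0 a))
      intro a; exact Nat.lt_irrefl 0 (hs 0 (hp₁.2 0 a))
    · rw [← mul_left_inj' hi]
      rw [funext_iff] at h
      exact h.2 i
  · simp only [φ, mem_filter, mem_finsuppAntidiag, mem_univ, exists_prop, true_and, and_assoc]
    rintro f ⟨hf, hf₃, hf₄⟩
    have hf' : f ∈ finsuppAntidiag s n := mem_finsuppAntidiag.mpr ⟨hf, hf₃⟩
    simp only [mem_finsuppAntidiag] at hf'
    refine ⟨⟨∑ i ∈ s, Multiset.replicate (f i / i) i, ?_, ?_⟩, ?_, ?_, ?_⟩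
    · intro i hi
      simp only [exists_prop, Multiset.mem_sum, mem_map, Function.Embedding.coeFn_mk] at hi
      rcases hi with ⟨t, ht, z⟩
      apply hs
      rwa [Multiset.eq_of_mem_replicate z]
    · simp_rw [Multiset.sum_sum, Multiset.sum_replicate, Nat.nsmul_eq_mul]
      rw [← hf'.1]
      refine sum_congr rfl fun i hi => Nat.div_mul_cancel ?_
      rcases hf₄ i hi with ⟨w, _, hw₂⟩
      rw [← hw₂]
      exact dvd_mul_left _ _
    · intro i
      simp_rw [Multiset.count_sum', Multiset.count_replicate, sum_ite_eq']
      split_ifs with h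
      · rcases hf₄ i h with ⟨w, hw₁, hw₂⟩
        rwa [← hw₂, Nat.mul_div_cancel _ (hs i h)]
      · exact hc _ h
    · intro i hi
      rw [Multiset.mem_sum] at hi
      rcases hi with ⟨j, hj₁, hj₂⟩
      rwa [Multiset.eq_of_mem_replicate hj₂]
    · ext i
      simp_rw [Multiset.count_sum', Multiset.count_replicate, sum_ite_eq']
      simp only [ne_eq, Multiset.mem_toFinset, not_not, smul_eq_mul, ite_mul,
        zero_mul, Finsupp.coe_mk]
      split_ifs with h
      · apply Nat.div_mul_cancel
        rcases hf₄ i h with ⟨w, _, hw₂⟩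
        apply Dvd.intro_left _ hw₂
      · apply symm
        rw [← Finsupp.notMem_support_iff]
        exact notMem_mono hf'.2 h


end
end EtaBarAux

namespace EtaBarAux
open Finset PowerSeries
open scoped Classical
noncomputable section

lemma image_mul_univ (i : ℕ) : ((· * (i + 1)) '' Set.univ) = {k : ℕ | (i + 1) ∣ k} := by
  ext k
  constructor
  · rintro ⟨a, -, rfl⟩
    exact Dvd.intro_left a rfl
  · rintro ⟨c, rfl⟩
    exact ⟨c, trivial, (mul_comm _ _)⟩

lemma Pcount_coeff_prod (n N : ℕ) (h : n ≤ N) :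
    (Pcount n : ℤ) = coeff (R := ℤ) n (∏ i ∈ range (N + 1), indicatorSeries ℤ {k | (i + 1) ∣ k}) := by
  have hp := partialGF_prop ℤ n ((range (N + 1)).map ⟨Nat.succ, Nat.succ_injective⟩)
      (fun i hi => by
        rw [mem_map] at hi
        obtain ⟨a, -, rfl⟩ := hi
        exact Nat.succ_pos a)
      (fun _ => Set.univ) (fun _ _ => trivial)
  have hfil : ({p : n.Partition | (∀ j, p.parts.count j ∈ Set.univ) ∧
      ∀ j ∈ p.parts, j ∈ (range (N + 1)).map ⟨Nat.succ, Nat.succ_injective⟩} : Finset _) =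
      (Finset.univ : Finset n.Partition) := by
    apply Finset.filter_true_of_mem
    intro p _
    refine ⟨fun j => trivial, fun j hj => ?_⟩
    have hj1 : 0 < j := p.parts_pos hj
    have hj2 : j ≤ n := by
      have := Multiset.single_le_sum (fun (x : ℕ) _ => Nat.zero_le x) _ hj
      rwa [p.parts_sum] at this
    rw [mem_map]
    exact ⟨j - 1, by rw [mem_range]; omega, by simp only [Function.Embedding.coeFn_mk]; omega⟩
  rw [hfil] at hp
  have hcard : (Finset.univ : Finset n.Partition).card = Pcount n := by
    rw [Pcount, Nat.card_eq_fintype_card, Finset.card_univ]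
  rw [hcard] at hp
  rw [Finset.prod_map] at hp
  rw [hp]
  congr 1
  apply Finset.prod_congr rfl
  intro a _
  simp only [Function.Embedding.coeFn_mk, Nat.succ_eq_add_one]
  exact congrArg _ (image_mul_univ a)

lemma one_sub_mul_indicator (i : ℕ) :
    ((1 : PowerSeries ℤ) - X ^ (i + 1)) * indicatorSeries ℤ {k | (i + 1) ∣ k} = 1 := by
  ext n
  rw [sub_mul, one_mul, map_sub, coeff_X_pow_mul', coeff_indicator, coeff_one]
  simp only [Set.mem_setOf_eq]
  rcases eq_or_ne n 0 with rfl | hn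
  · rw [if_pos (dvd_zero _), if_neg (by omega), if_pos rfl]
    ring
  · rw [if_neg hn]
    by_cases h : (i + 1) ∣ n
    · have h1 : i + 1 ≤ n := Nat.le_of_dvd (by omega) h
      have h2 : (i + 1) ∣ (n - (i + 1)) := (Nat.dvd_sub h dvd_rfl)
      rw [if_pos h, if_pos h1, coeff_indicator]
      simp only [Set.mem_setOf_eq]
      rw [if_pos h2]
      ring
    · rw [if_neg h]
      have : (if i + 1 ≤ n then coeff (R := ℤ) (n - (i + 1)) (indicatorSeries ℤ {k | (i + 1) ∣ k})
          else 0) = 0 := by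
        split_ifs with h1
        · rw [coeff_indicator]
          simp only [Set.mem_setOf_eq]
          rw [if_neg]
          intro h2
          apply h
          have := Nat.dvd_add h2 (dvd_refl (i + 1))
          rwa [Nat.sub_add_cancel h1] at this
        · rfl
      rw [this]
      ring

lemma coeff_stable {a m : ℕ} (f : PowerSeries ℤ) (h : a < m) :
    coeff (R := ℤ) a (f * (1 - X ^ m)) = coeff (R := ℤ) a f := by
  rw [mul_sub, mul_one, map_sub, coeff_mul_X_pow', if_neg (by omega), sub_zero]

lemma poch_coeff_eq (a N : ℕ) (h : a ≤ N) :
    coeff (R := ℤ) a qPochhammerInf = coeff (R := ℤ) a (∏ i ∈ range (N + 1), (1 - X ^ (i + 1))) := by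
  unfold qPochhammerInf
  rw [coeff_mk]
  induction N with
  | zero =>
    have : a = 0 := by omega
    subst this
    rfl
  | succ M ihM =>
    rcases Nat.lt_or_ge a (M + 1) with h1 | h1
    · conv_rhs => rw [prod_range_succ]
      rw [coeff_stable _ (by omega)]
      exact ihM (by omega)
    · have : a = M + 1 := by omega
      subst this
      rfl

lemma poch_mul_P : qPochhammerInf * (PowerSeries.mk fun n => (Pcount n : ℤ)) = 1 := by
  ext N
  rw [coeff_mul]
  have step : ∀ x ∈ antidiagonal N,
      coeff (R := ℤ) x.1 qPochhammerInf * coeff (R := ℤ) x.2 (PowerSeries.mk fun n => (Pcount n : ℤ)) =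
      coeff (R := ℤ) x.1 (∏ i ∈ range (N + 1), (1 - X ^ (i + 1))) *
      coeff (R := ℤ) x.2 (∏ i ∈ range (N + 1), indicatorSeries ℤ {k | (i + 1) ∣ k}) := by
    intro x hx
    rw [Finset.HasAntidiagonal.mem_antidiagonal] at hx
    rw [poch_coeff_eq x.1 N (by omega), coeff_mk, ← Pcount_coeff_prod x.2 N (by omega)]
  rw [Finset.sum_congr rfl step, ← coeff_mul, ← Finset.prod_mul_distrib]
  have : ∀ i ∈ range (N + 1),
      (1 - X ^ (i + 1)) * indicatorSeries ℤ {k | (i + 1) ∣ k} = 1 :=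
    fun i _ => one_sub_mul_indicator i
  rw [Finset.prod_congr rfl this, Finset.prod_const_one]

end
end EtaBarAux

namespace EtaBarAux
open Finset PowerSeries
open scoped Classical
noncomputable section

lemma rankCount_eq_zero {m' : ℤ} {n : ℕ} (h1 : 1 ≤ m') (h2 : (n : ℤ) ≤ m') :
    rankCount m' n = 0 := by
  rw [rankCount, Nat.card_eq_zero]
  left
  constructor
  rintro ⟨p, hp⟩
  rcases eq_or_ne n 0 with rfl | hn
  · rw [Nat.Partition.rank, Nat.Partition.partition_zero_parts p] at hp
    simp at hp
    omega
  · have := rank_lt p hn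
    omega

lemma G_split (m n : ℕ) :
    G (m + 1) n = rankCount ((m : ℤ) + 1) n + G (m + 2) n := by
  rw [G, G, rankCount, Nat.card_eq_fintype_card, Nat.card_eq_fintype_card,
    Nat.card_eq_fintype_card, Fintype.card_subtype, Fintype.card_subtype, Fintype.card_subtype,
    ← Finset.card_union_of_disjoint]
  · congr 1
    ext p
    simp only [Finset.mem_union, Finset.mem_filter, Finset.mem_univ, true_and]
    push_cast
    omega
  · rw [Finset.disjoint_left]
    intro p hp1 hp2
    simp only [Finset.mem_filter, Finset.mem_univ, true_and] at hp1 hp2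
    push_cast at hp1 hp2
    omega

lemma etaBar_finite (k n : ℕ) :
    etaBarEven k n =
      ∑ m ∈ range n, (Nat.choose (m + k) (2 * k) : ℤ) * (rankCount ((m : ℤ) + 1) n : ℤ) := by
  rw [etaBarEven]
  rw [tsum_eq_sum (s := range n) ?h]
  · apply Finset.sum_congr rfl
    intro m _
    congr 1
    have : ((m : ℤ) + (k : ℤ)) = ((m + k : ℕ) : ℤ) := by push_cast; ring
    rw [this, Ring.choose_natCast]
  · intro m hm
    rw [mem_range, not_lt] at hm
    rw [rankCount_eq_zero (by omega) (by exact_mod_cast by omega : (n : ℤ) ≤ (m : ℤ) + 1)]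
    simp

lemma etaBar_G {k : ℕ} (hk : 1 ≤ k) (n : ℕ) :
    etaBarEven k n =
      ∑ m ∈ range (n + 1), (Nat.choose (m + k - 1) (2 * k - 1) : ℤ) * (G (m + 1) n : ℤ) := by
  rw [etaBar_finite]
  -- rewrite rankCount as a difference of G's
  have hrc : ∀ m : ℕ, (rankCount ((m : ℤ) + 1) n : ℤ) = (G (m + 1) n : ℤ) - (G (m + 2) n : ℤ) := by
    intro m
    have := congrArg (Nat.cast : ℕ → ℤ) (G_split m n)
    push_cast at this
    omega
  simp_rw [hrc]
  -- Abel summation by induction on the length of the sum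
  have key : ∀ N : ℕ,
      ∑ m ∈ range N, (Nat.choose (m + k) (2 * k) : ℤ) * ((G (m + 1) n : ℤ) - (G (m + 2) n : ℤ)) =
      (∑ m ∈ range N, (Nat.choose (m + k - 1) (2 * k - 1) : ℤ) * (G (m + 1) n : ℤ)) -
        (Nat.choose (N + k - 1) (2 * k) : ℤ) * (G (N + 1) n : ℤ) := by
    intro N
    induction N with
    | zero =>
      simp only [range_zero, Finset.sum_empty]
      have : Nat.choose (0 + k - 1) (2 * k) = 0 := Nat.choose_eq_zero_of_lt (by omega)
      rw [this]
      simp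
    | succ N ihN =>
      rw [Finset.sum_range_succ, Finset.sum_range_succ, ihN]
      have hpascal : (Nat.choose (N + k) (2 * k) : ℤ) =
          (Nat.choose (N + k - 1) (2 * k) : ℤ) + (Nat.choose (N + k - 1) (2 * k - 1) : ℤ) := by
        have h1 : N + k = (N + k - 1) + 1 := by omega
        have h2 : 2 * k = (2 * k - 1) + 1 := by omega
        rw [h1, h2, Nat.choose_succ_succ]
        push_cast
        ring
      have hgoalN : (Nat.choose (N + 1 + k - 1) (2 * k) : ℤ) = (Nat.choose (N + k) (2 * k) : ℤ) := by
        congr 2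
        omega
      rw [hgoalN, show N + 1 + 1 = N + 2 from rfl]
      linear_combination (G (N + 1) n : ℤ) * hpascal
  have hzero : G (n + 1) n = 0 := G_eq_zero (by omega) (by omega)
  have := key n
  rw [Finset.sum_range_succ]
  rw [this, hzero]
  push_cast
  ring

end
end EtaBarAux

namespace EtaBarAux
open Finset PowerSeries
open scoped Classical
noncomputable section

/-- The series `Σ_{s,m ≥ 1} (-1)^(s-1) C(m+k-2, 2k-1) q^(pent s + s m)`. -/
noncomputable def W (k : ℕ) : PowerSeries ℤ :=
  PowerSeries.mk fun b => ∑ s ∈ range (b + 1), ∑ m ∈ range (b + 1),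
    if pent (s + 1) + (s + 1) * (m + 1) = b
    then (-1 : ℤ) ^ s * (Nat.choose (m + k - 1) (2 * k - 1) : ℤ) else 0

lemma W_coeff (k b B : ℕ) (h : b ≤ B) :
    coeff (R := ℤ) b (W k) = ∑ s ∈ range (B + 1), ∑ m ∈ range (B + 1),
      (if pent (s + 1) + (s + 1) * (m + 1) = b
      then (-1 : ℤ) ^ s * (Nat.choose (m + k - 1) (2 * k - 1) : ℤ) else 0) := by
  rw [W, coeff_mk]
  have hinner : ∀ s : ℕ,
      ∑ m ∈ range (b + 1), (if pent (s + 1) + (s + 1) * (m + 1) = b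
        then (-1 : ℤ) ^ s * (Nat.choose (m + k - 1) (2 * k - 1) : ℤ) else 0) =
      ∑ m ∈ range (B + 1), (if pent (s + 1) + (s + 1) * (m + 1) = b
        then (-1 : ℤ) ^ s * (Nat.choose (m + k - 1) (2 * k - 1) : ℤ) else 0) := by
    intro s
    apply Finset.sum_subset (by intro x hx; rw [mem_range] at *; omega)
    intro m _ hm
    rw [mem_range, not_lt] at hm
    rw [if_neg]
    have h1 : m + 1 ≤ (s + 1) * (m + 1) := Nat.le_mul_of_pos_left _ (by omega)
    omega
  rw [Finset.sum_congr rfl (fun s _ => hinner s)]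
  apply Finset.sum_subset (by intro x hx; rw [mem_range] at *; omega)
  intro s _ hs
  rw [mem_range, not_lt] at hs
  apply Finset.sum_eq_zero
  intro m _
  rw [if_neg]
  have h1 := pent_succ_ge s
  omega

lemma antidiag_collapse (e n : ℕ) (f : ℕ → ℤ) :
    ∑ x ∈ Finset.HasAntidiagonal.antidiagonal n, (if e = x.2 then f x.1 else 0) =
      if e ≤ n then f (n - e) else 0 := by
  rw [Finset.Nat.sum_antidiagonal_eq_sum_range_succ_mk]
  have hred : ∑ j ∈ range (n + 1), (if e = (j, n - j).2 then f (j, n - j).1 else 0) =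
      ∑ j ∈ range (n + 1), (if e = n - j then f j else 0) := rfl
  rw [hred]
  rcases le_or_gt e n with he | he
  · rw [if_pos he]
    have h1 : ∀ j ∈ range (n + 1), j ≠ n - e → (if e = n - j then f j else 0) = 0 := by
      intro j hj hne
      rw [mem_range] at hj
      rw [if_neg]
      omega
    rw [Finset.sum_eq_single_of_mem (n - e) (mem_range.2 (by omega)) h1, if_pos (by omega)]
  · rw [if_neg (by omega)]
    apply Finset.sum_eq_zero
    intro j hj
    rw [mem_range] at hj
    rw [if_neg (by omega)]

lemma mkEta_eq {k : ℕ} (hk : 1 ≤ k) :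
    (PowerSeries.mk fun n => etaBarEven k n) =
      (PowerSeries.mk fun n => (Pcount n : ℤ)) * W k := by
  ext n
  rw [coeff_mk, coeff_mul, etaBar_G hk]
  -- the common value
  set U : ℤ := ∑ s ∈ range (n + 1), ∑ m ∈ range (n + 1),
    (-1 : ℤ) ^ s * (Nat.choose (m + k - 1) (2 * k - 1) : ℤ) *
      PZ ((n : ℤ) - ((pent (s + 1) + (s + 1) * (m + 1) : ℕ) : ℤ)) with hU
  -- LHS = U
  have hLHS : ∑ m ∈ range (n + 1), (Nat.choose (m + k - 1) (2 * k - 1) : ℤ) *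
      (G (m + 1) n : ℤ) = U := by
    have hGm : ∀ m ∈ range (n + 1), (Nat.choose (m + k - 1) (2 * k - 1) : ℤ) *
        (G (m + 1) n : ℤ) =
        ∑ s ∈ range (n + 1), (-1 : ℤ) ^ s * (Nat.choose (m + k - 1) (2 * k - 1) : ℤ) *
          PZ ((n : ℤ) - ((pent (s + 1) + (s + 1) * (m + 1) : ℕ) : ℤ)) := by
      intro m _
      rw [G_eq_sum n (m + 1) (by omega)]
      have hext : ∑ s ∈ range n, (-1 : ℤ) ^ s *
            PZ ((n : ℤ) - pent (s + 1) - (s + 1) * ((m + 1 : ℕ) : ℤ)) =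
          ∑ s ∈ range (n + 1), (-1 : ℤ) ^ s *
            PZ ((n : ℤ) - pent (s + 1) - (s + 1) * ((m + 1 : ℕ) : ℤ)) := by
        apply Finset.sum_subset (by intro x hx; rw [mem_range] at *; omega)
        intro s _ hs
        rw [mem_range, not_lt] at hs
        rw [PZ_neg, mul_zero]
        have h1 := pent_succ_ge s
        have h2 : (s : ℤ) + 1 ≤ ((s : ℤ) + 1) * ((m + 1 : ℕ) : ℤ) :=
          le_mul_of_one_le_right (by positivity) (by push_cast; omega)
        omega
      rw [hext, Finset.mul_sum]
      apply Finset.sum_congr rfl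
      intro s _
      have harg : (n : ℤ) - pent (s + 1) - (s + 1) * ((m + 1 : ℕ) : ℤ) =
          (n : ℤ) - ((pent (s + 1) + (s + 1) * (m + 1) : ℕ) : ℤ) := by
        push_cast
        ring
      rw [harg]
      ring
    rw [Finset.sum_congr rfl hGm, hU]
    exact Finset.sum_comm
  -- RHS = U
  have hRHS : ∑ x ∈ Finset.HasAntidiagonal.antidiagonal n,
      coeff (R := ℤ) x.1 (PowerSeries.mk fun n => (Pcount n : ℤ)) * coeff (R := ℤ) x.2 (W k) = U := by
    have hx2 : ∀ x ∈ Finset.HasAntidiagonal.antidiagonal n,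
        coeff (R := ℤ) x.1 (PowerSeries.mk fun n => (Pcount n : ℤ)) * coeff (R := ℤ) x.2 (W k) =
        ∑ s ∈ range (n + 1), ∑ m ∈ range (n + 1),
          (if pent (s + 1) + (s + 1) * (m + 1) = x.2
          then (Pcount x.1 : ℤ) * ((-1 : ℤ) ^ s * (Nat.choose (m + k - 1) (2 * k - 1) : ℤ))
          else 0) := by
      intro x hx
      rw [Finset.HasAntidiagonal.mem_antidiagonal] at hx
      rw [coeff_mk, W_coeff k x.2 n (by omega), Finset.mul_sum]
      apply Finset.sum_congr rfl
      intro s _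
      rw [Finset.mul_sum]
      apply Finset.sum_congr rfl
      intro m _
      rw [mul_ite, mul_zero]
    rw [Finset.sum_congr rfl hx2, Finset.sum_comm]
    rw [hU]
    apply Finset.sum_congr rfl
    intro s _
    rw [Finset.sum_comm]
    apply Finset.sum_congr rfl
    intro m _
    have hcoll := antidiag_collapse (pent (s + 1) + (s + 1) * (m + 1)) n
      (fun a => (Pcount a : ℤ) * ((-1 : ℤ) ^ s * (Nat.choose (m + k - 1) (2 * k - 1) : ℤ)))
    have hconds : ∀ x ∈ Finset.HasAntidiagonal.antidiagonal n,
        (if pent (s + 1) + (s + 1) * (m + 1) = x.2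
          then (Pcount x.1 : ℤ) * ((-1 : ℤ) ^ s * (Nat.choose (m + k - 1) (2 * k - 1) : ℤ))
          else 0) =
        (if pent (s + 1) + (s + 1) * (m + 1) = x.2
          then (fun a => (Pcount a : ℤ) *
            ((-1 : ℤ) ^ s * (Nat.choose (m + k - 1) (2 * k - 1) : ℤ))) x.1
          else 0) := fun x _ => rfl
    rw [Finset.sum_congr rfl hconds, hcoll]
    rcases le_or_gt (pent (s + 1) + (s + 1) * (m + 1)) n with hle | hlt
    · rw [if_pos hle]
      have : (n : ℤ) - ((pent (s + 1) + (s + 1) * (m + 1) : ℕ) : ℤ) =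
          ((n - (pent (s + 1) + (s + 1) * (m + 1)) : ℕ) : ℤ) := by omega
      rw [this, PZ_ofNat]
      ring
    · rw [if_neg (by omega), PZ_neg (by omega), mul_zero]
  rw [hLHS, hRHS]

end
end EtaBarAux

namespace EtaBarAux
open Finset PowerSeries
open scoped Classical
noncomputable section

/-- `1 / (1 - X^d)^(r+1)`. -/
noncomputable def J (d r : ℕ) : PowerSeries ℤ :=
  PowerSeries.mk fun i => if d ∣ i then (Nat.choose (i / d + r) r : ℤ) else 0

lemma J_coeff (d r i : ℕ) :
    coeff (R := ℤ) i (J d r) = if d ∣ i then (Nat.choose (i / d + r) r : ℤ) else 0 := coeff_mk _ _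

lemma J_zero_eq (d : ℕ) : J d 0 = indicatorSeries ℤ {i | d ∣ i} := by
  ext i
  rw [J_coeff, coeff_indicator]
  simp [Nat.choose_zero_right]

lemma one_sub_mul_J_step (d r : ℕ) (hd : 0 < d) :
    ((1 : PowerSeries ℤ) - X ^ d) * J d (r + 1) = J d r := by
  ext i
  rw [sub_mul, one_mul, map_sub, coeff_X_pow_mul', J_coeff, J_coeff, J_coeff]
  by_cases h : d ∣ i
  · rcases eq_or_ne i 0 with rfl | hi
    · rw [if_pos h, if_pos (dvd_zero d), if_neg (by omega)]
      simp
    · obtain ⟨q, rfl⟩ := h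
      rcases q with _ | q'
      · simp at hi
      · have hdd : d * (q' + 1) = d * q' + d := Nat.mul_succ d q'
        have hdi : d ≤ d * (q' + 1) := by omega
        have hsub : d * (q' + 1) - d = d * q' := by omega
        have hdvd2 : d ∣ d * (q' + 1) - d := by rw [hsub]; exact dvd_mul_right d q'
        rw [if_pos (dvd_mul_right d _), if_pos hdi, if_pos (dvd_mul_right d _), hsub,
          if_pos (dvd_mul_right d q')]
        rw [Nat.mul_div_cancel_left _ hd, Nat.mul_div_cancel_left _ hd]
        have hps : Nat.choose (q' + r + 1 + 1) (r + 1) =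
            Nat.choose (q' + r + 1) r + Nat.choose (q' + r + 1) (r + 1) :=
          Nat.choose_succ_succ _ _
        rw [show q' + 1 + (r + 1) = q' + r + 1 + 1 from by omega,
          show q' + (r + 1) = q' + r + 1 from by omega,
          show q' + 1 + r = q' + r + 1 from by omega, hps]
        push_cast
        ring
  · rw [if_neg h, if_neg h]
    have hinner : (if d ≤ i then
        (if d ∣ i - d then (Nat.choose ((i - d) / d + (r + 1)) (r + 1) : ℤ) else 0) else 0) = 0 := by
      split_ifs with h1 h2
      · exfalso
        apply h
        have := Nat.dvd_add h2 (dvd_refl d)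
        rwa [Nat.sub_add_cancel h1] at this
      · rfl
      · rfl
    rw [hinner]
    ring

lemma one_sub_pow_mul_J (d r : ℕ) (hd : 0 < d) :
    ((1 : PowerSeries ℤ) - X ^ d) ^ (r + 1) * J d r = 1 := by
  induction r with
  | zero =>
    rw [pow_one, J_zero_eq]
    have := one_sub_mul_indicator (d - 1)
    rwa [show d - 1 + 1 = d from by omega] at this
  | succ r ih =>
    rw [pow_succ, mul_assoc, one_sub_mul_J_step d r hd, ih]

lemma ringInverse_pow {k : ℕ} (hk : 1 ≤ k) (d : ℕ) (hd : 0 < d) :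
    Ring.inverse ((1 - X ^ d : PowerSeries ℤ) ^ (2 * k)) = J d (2 * k - 1) := by
  have h : ((1 - X ^ d : PowerSeries ℤ) ^ (2 * k)) * J d (2 * k - 1) = 1 := by
    have := one_sub_pow_mul_J d (2 * k - 1) hd
    rwa [show 2 * k - 1 + 1 = 2 * k from by omega] at this
  have hu : IsUnit ((1 - X ^ d : PowerSeries ℤ) ^ (2 * k)) := IsUnit.of_mul_eq_one _ h
  obtain ⟨u, hu'⟩ := hu
  rw [← hu', Ring.inverse_unit]
  exact Units.inv_eq_of_mul_eq_one_right (by rw [hu']; exact h)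

lemma seriesSum_eq_W {k : ℕ} (hk : 1 ≤ k) :
    seriesSum (fun j =>
      ((-1 : ℤ) ^ j) •
        (PowerSeries.X ^ ((j + 1) * (3 * (j + 1) + 1) / 2 + k * (j + 1)) *
          Ring.inverse ((1 - PowerSeries.X ^ (j + 1)) ^ (2 * k)))) = W k := by
  ext N
  unfold seriesSum
  rw [coeff_mk, W_coeff k N N le_rfl]
  apply Finset.sum_congr rfl
  intro j hj
  dsimp only
  -- the exponent
  have hE : (j + 1) * (3 * (j + 1) + 1) / 2 + k * (j + 1) =
      pent (j + 1) + (j + 1) * (k + 1) := by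
    have h1 : (j + 1) * (3 * (j + 1) + 1) = (j + 1) * (3 * (j + 1) - 1) + (j + 1) * 2 := by
      rw [show 3 * (j + 1) + 1 = 3 * j + 4 from by omega,
        show 3 * (j + 1) - 1 = 3 * j + 2 from by omega]
      ring
    rw [pent, h1, Nat.add_mul_div_right _ _ (by norm_num : (0:ℕ) < 2)]
    ring
  rw [ringInverse_pow hk (j + 1) (by omega)]
  rw [map_smul, smul_eq_mul, coeff_X_pow_mul', hE]
  set E := pent (j + 1) + (j + 1) * (k + 1) with hEdef
  by_cases hc : ∃ m0 : ℕ, pent (j + 1) + (j + 1) * (m0 + 1) = N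
  · obtain ⟨m0, hm0⟩ := hc
    have hm0lt : m0 ∈ range (N + 1) := by
      rw [mem_range]
      have : m0 + 1 ≤ (j + 1) * (m0 + 1) := Nat.le_mul_of_pos_left _ (by omega)
      omega
    have hrhs : ∑ m ∈ range (N + 1),
        (if pent (j + 1) + (j + 1) * (m + 1) = N
        then (-1 : ℤ) ^ j * (Nat.choose (m + k - 1) (2 * k - 1) : ℤ) else 0) =
        (-1 : ℤ) ^ j * (Nat.choose (m0 + k - 1) (2 * k - 1) : ℤ) := by
      rw [Finset.sum_eq_single_of_mem m0 hm0lt, if_pos hm0]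
      intro m _ hne
      rw [if_neg]
      intro hcontra
      apply hne
      have := hcontra.trans hm0.symm
      have h2 : (j + 1) * (m + 1) = (j + 1) * (m0 + 1) := by omega
      have := Nat.eq_of_mul_eq_mul_left (by omega : 0 < j + 1) h2
      omega
    rw [hrhs]
    rcases le_or_gt k m0 with hkm | hkm
    · -- E ≤ N, everything matches
      have hmul : (j + 1) * (m0 + 1) = (j + 1) * (m0 - k) + (j + 1) * (k + 1) := by
        rw [← Nat.mul_add]
        congr 1
        omega
      have hEN : E ≤ N := by omega
      have hNE : N - E = (j + 1) * (m0 - k) := by omega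
      rw [if_pos hEN, J_coeff, hNE, if_pos (dvd_mul_right _ _),
        Nat.mul_div_cancel_left _ (by omega : 0 < j + 1)]
      rw [show m0 - k + (2 * k - 1) = m0 + k - 1 from by omega]
    · -- E > N, and the binomial coefficient on the right vanishes
      have hlt : (j + 1) * (m0 + 1) < (j + 1) * (k + 1) := by
        apply Nat.mul_lt_mul_of_le_of_lt (le_refl _) (by omega) (by omega)
      rw [if_neg (by omega)]
      rw [Nat.choose_eq_zero_of_lt (by omega : m0 + k - 1 < 2 * k - 1)]
      simp
  · -- no solution: both sides vanish
    push_neg at hc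
    have hrhs : ∑ m ∈ range (N + 1),
        (if pent (j + 1) + (j + 1) * (m + 1) = N
        then (-1 : ℤ) ^ j * (Nat.choose (m + k - 1) (2 * k - 1) : ℤ) else 0) = 0 := by
      apply Finset.sum_eq_zero
      intro m _
      exact if_neg (hc m)
    rw [hrhs]
    have hlhs : (if E ≤ N then coeff (R := ℤ) (N - E) (J (j + 1) (2 * k - 1)) else 0) = 0 := by
      split_ifs with h1
      · rw [J_coeff]
        split_ifs with h2
        · exfalso
          obtain ⟨q, hq⟩ := h2
          apply hc (k + q)
          have hmul : (j + 1) * (k + q + 1) = (j + 1) * (k + 1) + (j + 1) * q := by ring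
          omega
        · rfl
      · rfl
    rw [hlhs, mul_zero]

end
end EtaBarAux

/-- `Σ_{n≥1} η̄_{2k}(n) q^n = (q;q)_∞⁻¹ · Σ_{n≥1} (-1)^(n-1)
q^(n(3n+1)/2 + kn) / (1-q^n)^(2k)` for `k ≥ 1` (the summation index `j : ℕ` below stands
for `n = j + 1`; the coefficient of `q^0` on the left vanishes since `η̄_{2k}(0) = 0`). -/
theorem etaBarEven_generating_function (k : ℕ) (hk : 1 ≤ k) :
    (PowerSeries.mk fun n => etaBarEven k n) =
      Ring.inverse qPochhammerInf *
        seriesSum (fun j =>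
          ((-1 : ℤ) ^ j) •
            (PowerSeries.X ^ ((j + 1) * (3 * (j + 1) + 1) / 2 + k * (j + 1)) *
              Ring.inverse ((1 - PowerSeries.X ^ (j + 1)) ^ (2 * k)))) := by
  have h1 := EtaBarAux.poch_mul_P
  have hu : IsUnit qPochhammerInf := IsUnit.of_mul_eq_one _ h1
  have h2 : qPochhammerInf * (PowerSeries.mk fun n => etaBarEven k n) =
      seriesSum (fun j =>
        ((-1 : ℤ) ^ j) •
          (PowerSeries.X ^ ((j + 1) * (3 * (j + 1) + 1) / 2 + k * (j + 1)) *
            Ring.inverse ((1 - PowerSeries.X ^ (j + 1)) ^ (2 * k)))) := by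
    rw [EtaBarAux.mkEta_eq hk, ← mul_assoc, h1, one_mul, EtaBarAux.seriesSum_eq_W hk]
  rw [← h2, Ring.inverse_mul_cancel_left _ _ hu]
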